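/- arXiv:2605.24109 — 2 statements merged into one kernel-verified Lean document; each statement's English description precedes it below -/
import Mathlib

section
/- Let M ≥ 1, q_j = 2^{-j}, and let real numbers b, τ_j, a_j, c_j, n_j, m_j, h_j satisfy: (i) b ≤ τ_0 - 2; (ii) for every 1 ≤ k ≤ M, b ≤ 2(1-2^{-k})α - 5/2 - τ_0 + (1/2)∑_{j=1}^k τ_j + 3τ_{k+1} - n_0 - (3/2)∑_{j=1}^k n_j + (1/2)∑_{j=1}^k m_j + m_{k+1} + 2∑_{j=0}^{k-1} h_j + 4h_k; (iii) for all j ≥ 0: n_j = a_{j+1} + c_j, n_j ≤ τ_j, τ_{j+1} ≤ a_{j+1}, h_j ≤ c_j, m_{j+1} + 2h_j ≤ q_{j+1} + c_j, and a_j ≤ α q_j for j ≥ 1. Then for every 1 ≤ K ≤ M, b ≤ (4/5 + 1/(5·6^K))α - 2. -/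
/-- The right-hand side of the Kakeya/Szemerédi–Trotter estimate. -/
noncomputable def stmt9F (α : ℝ) (τ n m h : ℕ → ℝ) (k : ℕ) : ℝ :=
  2 * (1 - (1/2 : ℝ) ^ k) * α - 5/2 - τ 0
    + (1/2) * ∑ j ∈ Finset.Icc 1 k, τ j + 3 * τ (k + 1)
    - n 0 - (3/2) * ∑ j ∈ Finset.Icc 1 k, n j
    + (1/2) * ∑ j ∈ Finset.Icc 1 k, m j + m (k + 1)
    + 2 * ∑ j ∈ Finset.range k, h j + 4 * h k

/-- Partial weighted sums of the estimates. -/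
noncomputable def stmt9S (α b : ℝ) (τ n m h : ℕ → ℝ) (K : ℕ) : ℝ :=
  (1/3) * (τ 0 - 2) + ∑ k ∈ Finset.Icc 1 K, 4 * (1/3 : ℝ) ^ (k+1) * stmt9F α τ n m h k

/-- Boundary slack term. -/
noncomputable def stmt9B (α : ℝ) (τ a c m h : ℕ → ℝ) (K : ℕ) : ℝ :=
  (1/3 : ℝ) ^ K * (15 * a K - 13 * τ K + 3 * a (K+1) + 3 * c K - 6 * τ (K+1)
    - 2 * m (K+1) - 8 * h K + (α + 1) * (1/2 : ℝ) ^ K)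

/-- Closed-form target. -/
noncomputable def stmt9T (α : ℝ) (K : ℕ) : ℝ := (4/5) * α - 2 + (α/5) * ((1/3 : ℝ) ^ K * (1/2 : ℝ) ^ K)

lemma stmt9T_eq (α : ℝ) (K : ℕ) :
    stmt9T α K = (4/5 + 1/(5 * (6 : ℝ) ^ K)) * α - 2 := by
  have h6 : (1/3 : ℝ) ^ K * (1/2 : ℝ) ^ K = 1 / (6 : ℝ) ^ K := by
    rw [← mul_pow, show (1/3 : ℝ) * (1/2) = (6 : ℝ)⁻¹ by norm_num, inv_pow, one_div]
  have h6pos : (0:ℝ) < (6 : ℝ) ^ K := by positivity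
  rw [stmt9T, h6]
  field_simp
  ring

lemma stmt9A (M : ℕ) (α b : ℝ) (τ n m h : ℕ → ℝ)
    (hbasic : b ≤ τ 0 - 2)
    (hLP : ∀ k, 1 ≤ k → k ≤ M → b ≤ stmt9F α τ n m h k) :
    ∀ K, K ≤ M → (1 - 2 * (1/3 : ℝ) ^ (K+1)) * b ≤ stmt9S α b τ n m h K := by
  intro K
  induction K with
  | zero =>
    intro _
    have : Finset.Icc 1 0 = (∅ : Finset ℕ) := by decide
    simp only [stmt9S, this, Finset.sum_empty]
    norm_num
    linarith
  | succ K ihK =>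
    intro hKM
    have hexp : stmt9S α b τ n m h (K+1)
        = stmt9S α b τ n m h K + 4 * (1/3 : ℝ) ^ (K+2) * stmt9F α τ n m h (K+1) := by
      rw [stmt9S, stmt9S, Finset.sum_Icc_succ_top (by omega : 1 ≤ K + 1)]
      ring
    have h2 : b ≤ stmt9F α τ n m h (K+1) := hLP (K+1) (by omega) hKM
    have h3 : (0:ℝ) ≤ 4 * (1/3 : ℝ) ^ (K+2) := by positivity
    have h4 := mul_le_mul_of_nonneg_left h2 h3
    have ihK' := ihK (by omega)
    rw [hexp]
    simp only [pow_succ] at h4 ihK' ⊢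
    linarith [h4, ihK']

lemma stmt9R (α : ℝ) (τ a c n m h : ℕ → ℝ)
    (hn : ∀ j, n j = a (j + 1) + c j)
    (hnτ : ∀ j, n j ≤ τ j)
    (hτa : ∀ j, τ (j + 1) ≤ a (j + 1))
    (hhc : ∀ j, h j ≤ c j)
    (hmh : ∀ j, m (j + 1) + 2 * h j ≤ (1/2 : ℝ) ^ (j + 1) + c j) :
    ∀ (b : ℝ) (N : ℕ), stmt9S α b τ n m h (N+1) + 2 * (1/3 : ℝ) ^ (N+2) * stmt9F α τ n m h (N+2)
      ≤ stmt9T α (N+2) - stmt9B α τ a c m h (N+2) := by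
  intro b N
  induction N with
  | zero =>
    have hI1 : Finset.Icc 1 1 = ({1} : Finset ℕ) := by decide
    have hI2 : Finset.Icc 1 2 = ({1, 2} : Finset ℕ) := by decide
    simp only [stmt9S, stmt9F, stmt9T, stmt9B, hI1, hI2, Finset.sum_singleton,
      Finset.sum_insert (by decide : (1:ℕ) ∉ ({2} : Finset ℕ)),
      Finset.sum_range_succ, Finset.sum_range_zero]
    have e0 := hn 0; have e1 := hn 1; have e2 := hn 2
    have g01 := hmh 0; have g12 := hmh 1
    norm_num at g01 g12 ⊢
    linarith [hnτ 0, hnτ 1, hhc 0, hhc 1, hτa 0, e0, e1, e2, g01, g12]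
  | succ N ih =>
    have hexpS : stmt9S α b τ n m h (N+2)
        = stmt9S α b τ n m h (N+1) + 4 * (1/3 : ℝ) ^ (N+3) * stmt9F α τ n m h (N+2) := by
      rw [stmt9S, stmt9S, Finset.sum_Icc_succ_top (by omega : 1 ≤ N + 2)]
      ring
    have hexpF : stmt9F α τ n m h (N+3)
        = stmt9F α τ n m h (N+2)
          + 2 * ((1/2:ℝ)^(N+2) - (1/2:ℝ)^(N+3)) * α
          + (1/2) * τ (N+3) - 3 * τ (N+3) + 3 * τ (N+4)
          - (3/2) * n (N+3) + (1/2) * m (N+3) - m (N+3) + m (N+4)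
          + 2 * h (N+2) - 4 * h (N+2) + 4 * h (N+3) := by
      rw [stmt9F, stmt9F, Finset.sum_Icc_succ_top (by omega : 1 ≤ N + 3),
        Finset.sum_Icc_succ_top (by omega : 1 ≤ N + 3),
        Finset.sum_Icc_succ_top (by omega : 1 ≤ N + 3),
        Finset.sum_range_succ (h) (N+2)]
      ring
    -- multiplied structural facts at the boundary
    have hp3 : (0:ℝ) ≤ (1/3 : ℝ) ^ (N+2) := by positivity
    have H1 := mul_le_mul_of_nonneg_left (hτa (N+1)) hp3
    have H2 := mul_le_mul_of_nonneg_left (hnτ (N+2)) hp3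
    have H3 := mul_le_mul_of_nonneg_left (hhc (N+2)) hp3
    have H4 := mul_le_mul_of_nonneg_left (hmh (N+2)) hp3
    have E1 : (1/3 : ℝ) ^ (N+2) * n (N+2) = (1/3 : ℝ) ^ (N+2) * (a (N+3) + c (N+2)) := by
      rw [hn (N+2)]
    have E2 : (1/3 : ℝ) ^ (N+2) * n (N+3) = (1/3 : ℝ) ^ (N+2) * (a (N+4) + c (N+3)) := by
      rw [hn (N+3)]
    rw [hexpS, hexpF]
    rw [show stmt9B α τ a c m h (N+3) = (1/3 : ℝ) ^ (N+3) * (15 * a (N+3) - 13 * τ (N+3)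
        + 3 * a (N+4) + 3 * c (N+3) - 6 * τ (N+4)
        - 2 * m (N+4) - 8 * h (N+3) + (α + 1) * (1/2 : ℝ) ^ (N+3)) from rfl,
      show stmt9T α (N+3) = (4/5) * α - 2 + (α/5) * ((1/3 : ℝ) ^ (N+3) * (1/2 : ℝ) ^ (N+3))
        from rfl]
    have hB2 : stmt9B α τ a c m h (N+2) = (1/3 : ℝ) ^ (N+2) * (15 * a (N+2) - 13 * τ (N+2)
        + 3 * a (N+3) + 3 * c (N+2) - 6 * τ (N+3)
        - 2 * m (N+3) - 8 * h (N+2) + (α + 1) * (1/2 : ℝ) ^ (N+2)) := rfl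
    have hT2 : stmt9T α (N+2) = (4/5) * α - 2
        + (α/5) * ((1/3 : ℝ) ^ (N+2) * (1/2 : ℝ) ^ (N+2)) := rfl
    rw [hB2, hT2] at ih
    simp only [pow_succ] at ih H1 H2 H3 H4 E1 E2 ⊢
    linarith [ih, H1, H2, H3, H4, E1, E2]

/-- the linear programming core of Theorem 1.5 (case `α ≤ 1/2`). From the
basic estimate `b ≤ τ₀ - 2`, the Kakeya/Szemerédi–Trotter estimates for `1 ≤ k ≤ M`, and the
structural exponent inequalities (with `q_j = 2^{-j}`), one gets
`b ≤ (4/5 + 1/(5·6^K))α - 2` for every `1 ≤ K ≤ M`. -/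
theorem stmt9 (M : ℕ) (α b : ℝ) (τ a c n m h : ℕ → ℝ)
    (hα : 0 < α ∧ α ≤ 1)
    (hbasic : b ≤ τ 0 - 2)
    (hLP : ∀ k, 1 ≤ k → k ≤ M →
      b ≤ 2 * (1 - (1/2 : ℝ) ^ k) * α - 5/2 - τ 0
        + (1/2) * ∑ j ∈ Finset.Icc 1 k, τ j + 3 * τ (k + 1)
        - n 0 - (3/2) * ∑ j ∈ Finset.Icc 1 k, n j
        + (1/2) * ∑ j ∈ Finset.Icc 1 k, m j + m (k + 1)
        + 2 * ∑ j ∈ Finset.range k, h j + 4 * h k)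
    (hn : ∀ j, n j = a (j + 1) + c j)
    (hnτ : ∀ j, n j ≤ τ j)
    (hτa : ∀ j, τ (j + 1) ≤ a (j + 1))
    (hhc : ∀ j, h j ≤ c j)
    (hmh : ∀ j, m (j + 1) + 2 * h j ≤ (1/2 : ℝ) ^ (j + 1) + c j)
    (ha : ∀ j, 1 ≤ j → a j ≤ α * (1/2 : ℝ) ^ j) :
    ∀ K, 1 ≤ K → K ≤ M → b ≤ (4/5 + 1/(5 * (6 : ℝ) ^ K)) * α - 2 := by
  have hLP' : ∀ k, 1 ≤ k → k ≤ M → b ≤ stmt9F α τ n m h k := hLP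
  intro K hK1 hKM
  rw [← stmt9T_eq]
  match K, hK1 with
  | 1, _ =>
    -- direct case
    have hL := hLP' 1 (by omega) hKM
    have hI1 : Finset.Icc 1 1 = ({1} : Finset ℕ) := by decide
    rw [stmt9F] at hL
    simp only [hI1, Finset.sum_singleton, Finset.sum_range_one] at hL
    have e0 := hn 0; have e1 := hn 1
    have g0 := hmh 0; have g1 := hmh 1
    have ha1 := ha 1 (by omega)
    rw [show stmt9T α 1 = (4/5) * α - 2 + (α/5) * ((1/3 : ℝ)^1 * (1/2 : ℝ)^1) from rfl]
    norm_num at hL g0 g1 ha1 ⊢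
    linarith [hbasic, hL, hnτ 0, hnτ 1, hτa 0, hτa 1, hhc 0, hhc 1, e0, e1, g0, g1, ha1]
  | (N+2), _ =>
    have hA := stmt9A M α b τ n m h hbasic hLP' (N+1) (by omega)
    have hL := hLP' (N+2) (by omega) hKM
    have hR := stmt9R α τ a c n m h hn hnτ hτa hhc hmh b N
    have hp3 : (0:ℝ) ≤ (1/3 : ℝ) ^ (N+2) := by positivity
    have h2 : (0:ℝ) ≤ 2 * (1/3 : ℝ) ^ (N+2) := by positivity
    have hLm := mul_le_mul_of_nonneg_left hL h2
    -- B ≥ 0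
    have hBpos : 0 ≤ stmt9B α τ a c m h (N+2) := by
      rw [show stmt9B α τ a c m h (N+2) = (1/3 : ℝ) ^ (N+2) * (15 * a (N+2) - 13 * τ (N+2)
        + 3 * a (N+3) + 3 * c (N+2) - 6 * τ (N+3)
        - 2 * m (N+3) - 8 * h (N+2) + (α + 1) * (1/2 : ℝ) ^ (N+2)) from rfl]
      apply mul_nonneg hp3
      have g2 := hmh (N+2)
      have ha2 := ha (N+2) (by omega)
      have p2s : ((1:ℝ)/2) ^ (N+3) = (1/2 : ℝ) ^ (N+2) * (1/2) := by rw [pow_succ]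
      rw [p2s] at g2
      have hpp : (0:ℝ) ≤ (1/2 : ℝ) ^ (N+2) := by positivity
      linarith [hτa (N+1), hnτ (N+2), hn (N+2), hτa (N+2), hhc (N+2), g2, ha2]
    -- combine: b ≤ S(N+1) + 2(1/3)^(N+2) F(N+2) ≤ T - B ≤ T
    have hcomb : b ≤ stmt9S α b τ n m h (N+1)
        + 2 * (1/3 : ℝ) ^ (N+2) * stmt9F α τ n m h (N+2) := by
      nlinarith [hA, hLm]
    linarith [hcomb, hR, hBpos]
end

section
/- The feasibility of the exponent 4α/5: for any M ≥ 1 and α ∈ (0,1], the assignment b = 4α/5 - 2, τ_0 = 4α/5, τ_j = a_j = (4α/5)·2^{-j} for 1 ≤ j ≤ M+1, c_0 = h_0 = 2α/5, c_j = h_j = (4α/5)·2^{-(j+1)} for 1 ≤ j ≤ M, m_{j+1} = (1 - 4α/5)·2^{-(j+1)} for 0 ≤ j ≤ M, n_j = a_{j+1} + c_j, satisfies all the structural constraints: n_j = τ_j, τ_{j+1} = a_{j+1}, h_j = c_j, m_{j+1} + 2h_j = q_{j+1} + c_j (with q_j = 2^{-j}), a_j ≤ α q_j, and moreover b = τ_0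 - 2, and for every 1 ≤ k ≤ M the expression 2(1-2^{-k})α - 5/2 - τ_0 + (1/2)∑_{j=1}^k τ_j + 3τ_{k+1} - n_0 - (3/2)∑_{j=1}^k n_j + (1/2)∑_{j=1}^k m_j + m_{k+1} + 2∑_{j=0}^{k-1} h_j + 4h_k equals exactly 4α/5 - 2. -/
lemma geom_half (k : ℕ) : ∑ j ∈ Finset.Icc 1 k, ((1/2 : ℝ)) ^ j = 1 - (1/2 : ℝ) ^ k := by
  induction k with
  | zero => simp
  | succ k ih =>
    rw [Finset.sum_Icc_succ_top (by omega), ih]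
    ring

/-- Remark 4.2: feasibility of the exponent `4α/5`. The explicit assignment
`b = 4α/5 - 2`, `τ₀ = 4α/5`, `τ_j = a_j = (4α/5)2^{-j}` for `1 ≤ j ≤ M+1`,
`c₀ = h₀ = 2α/5`, `c_j = h_j = (4α/5)2^{-(j+1)}` for `1 ≤ j ≤ M`,
`m_{j+1} = (1 - 4α/5)2^{-(j+1)}`, `n_j = a_{j+1} + c_j`, saturates all the structural
constraints, the basic estimate, and each of the `L₀,…,L_k` estimates at `4α/5 - 2`. -/
theorem stmt11 (M : ℕ) (hM : 1 ≤ M) (α : ℝ) (hα : 0 < α ∧ α ≤ 1)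
    (b : ℝ) (τ a c n m h : ℕ → ℝ)
    (hb : b = 4 * α / 5 - 2)
    (hτ0 : τ 0 = 4 * α / 5)
    (hτ : ∀ j, 1 ≤ j → j ≤ M + 1 → τ j = (4 * α / 5) * (1/2 : ℝ) ^ j)
    (ha : ∀ j, 1 ≤ j → j ≤ M + 1 → a j = (4 * α / 5) * (1/2 : ℝ) ^ j)
    (hc0 : c 0 = 2 * α / 5) (hh0 : h 0 = 2 * α / 5)
    (hc : ∀ j, 1 ≤ j → j ≤ M → c j = (4 * α / 5) * (1/2 : ℝ) ^ (j + 1))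
    (hh : ∀ j, 1 ≤ j → j ≤ M → h j = (4 * α / 5) * (1/2 : ℝ) ^ (j + 1))
    (hm : ∀ j ≤ M, m (j + 1) = (1 - 4 * α / 5) * (1/2 : ℝ) ^ (j + 1))
    (hn : ∀ j ≤ M, n j = a (j + 1) + c j) :
    (∀ j ≤ M, n j = τ j) ∧
    (∀ j ≤ M, τ (j + 1) = a (j + 1)) ∧
    (∀ j ≤ M, h j = c j) ∧
    (∀ j ≤ M, m (j + 1) + 2 * h j = (1/2 : ℝ) ^ (j + 1) + c j) ∧
    (∀ j, 1 ≤ j → j ≤ M + 1 → a j ≤ α * (1/2 : ℝ) ^ j) ∧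
    (b = τ 0 - 2) ∧
    (∀ k, 1 ≤ k → k ≤ M →
      2 * (1 - (1/2 : ℝ) ^ k) * α - 5/2 - τ 0
        + (1/2) * ∑ j ∈ Finset.Icc 1 k, τ j + 3 * τ (k + 1)
        - n 0 - (3/2) * ∑ j ∈ Finset.Icc 1 k, n j
        + (1/2) * ∑ j ∈ Finset.Icc 1 k, m j + m (k + 1)
        + 2 * ∑ j ∈ Finset.range k, h j + 4 * h k = 4 * α / 5 - 2) := by
  -- values on all relevant indices
  have hnval : ∀ j ≤ M, n j = (4 * α / 5) * (1/2 : ℝ) ^ j := by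
    intro j hj
    rw [hn j hj]
    rcases Nat.eq_zero_or_pos j with rfl | hj1
    · rw [ha 1 le_rfl (by omega), hc0]; ring
    · rw [ha (j+1) (by omega) (by omega), hc j hj1 hj]; ring
  refine ⟨?_, ?_, ?_, ?_, ?_, ?_, ?_⟩
  · intro j hj
    rw [hnval j hj]
    rcases Nat.eq_zero_or_pos j with rfl | hj1
    · rw [hτ0]; norm_num
    · rw [hτ j hj1 (by omega)]
  · intro j hj
    rw [hτ (j+1) (by omega) (by omega), ha (j+1) (by omega) (by omega)]
  · intro j hj
    rcases Nat.eq_zero_or_pos j with rfl | hj1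
    · rw [hh0, hc0]
    · rw [hh j hj1 hj, hc j hj1 hj]
  · intro j hj
    rcases Nat.eq_zero_or_pos j with rfl | hj1
    · rw [hm 0 (by omega), hh0, hc0]; ring
    · rw [hm j hj, hh j hj1 hj, hc j hj1 hj]; ring
  · intro j hj1 hjM
    rw [ha j hj1 hjM]
    have hp : (0:ℝ) < (1/2 : ℝ) ^ j := by positivity
    nlinarith [hα.1]
  · rw [hb, hτ0]
  · intro k hk1 hkM
    have hτs : ∑ j ∈ Finset.Icc 1 k, τ j = (4 * α / 5) * (1 - (1/2 : ℝ) ^ k) := by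
      rw [← geom_half k, Finset.mul_sum]
      exact Finset.sum_congr rfl fun j hj => by
        simp only [Finset.mem_Icc] at hj
        exact hτ j hj.1 (by omega)
    have hns : ∑ j ∈ Finset.Icc 1 k, n j = (4 * α / 5) * (1 - (1/2 : ℝ) ^ k) := by
      rw [← geom_half k, Finset.mul_sum]
      exact Finset.sum_congr rfl fun j hj => by
        simp only [Finset.mem_Icc] at hj
        exact hnval j (by omega)
    have hms : ∑ j ∈ Finset.Icc 1 k, m j = (1 - 4 * α / 5) * (1 - (1/2 : ℝ) ^ k) := by
      rw [← geom_half k, Finset.mul_sum]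
      refine Finset.sum_congr rfl fun j hj => ?_
      simp only [Finset.mem_Icc] at hj
      obtain ⟨i, rfl⟩ := Nat.exists_eq_add_of_le hj.1
      rw [Nat.add_comm 1 i, hm i (by omega)]
    have hhs : ∑ j ∈ Finset.range k, h j = (4 * α / 5) * (1 - (1/2 : ℝ) ^ k) := by
      have : ∀ j ∈ Finset.range k, h j = (4 * α / 5) * (1/2 : ℝ) ^ (j + 1) := by
        intro j hj
        simp only [Finset.mem_range] at hj
        rcases Nat.eq_zero_or_pos j with rfl | hj1
        · rw [hh0]; ring
        · exact hh j hj1 (by omega)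
      rw [Finset.sum_congr rfl this]
      have : ∑ j ∈ Finset.range k, (4 * α / 5) * (1/2 : ℝ) ^ (j + 1)
          = ∑ j ∈ Finset.Icc 1 k, (4 * α / 5 : ℝ) * (1/2 : ℝ) ^ j := by
        rw [Finset.range_eq_Ico]
        rw [Finset.sum_Ico_eq_sum_range]
        rw [show Finset.Icc 1 k = Finset.Ico 1 (k+1) by rfl, Finset.sum_Ico_eq_sum_range]
        simp [add_comm]
      rw [this, ← Finset.mul_sum, geom_half]
    rw [hτs, hns, hms, hhs, hτ0, hτ (k+1) (by omega) (by omega),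
      hnval 0 (by omega), hm k hkM, hh k hk1 hkM]
    ring
end
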